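/- Let X be a real separated locally convex space, let g : X → ℝ ∪ {+∞} be a proper lower semicontinuous sublinear function, and let x* ∈ X*. Then L_{x*} := {x ∈ X : g(x) = ⟨x, x*⟩ and g(−x) = −⟨x, x*⟩} is a closed linear subspace of X, and L_{x*} = {x ∈ X : g(x) ≤ ⟨x, x*⟩ and g(−x) ≤ −⟨x, x*⟩} = [∂g(0) − x*]^⊥. Moreover, g(x + u) = g(x) + ⟨u, x*⟩ for all x ∈ X and all u ∈ L_{x*}. -/

import Mathlib

open Filter Topology Set Pointwise TopologicalSpace

noncomputable section

section Defs

variable {E : Type*} [AddCommGroup E] [Module ℝ E]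

/-- Recession function of `f` based at `x₀ ∈ dom f`, as the supremum of the
(nondecreasing) difference quotients `(f (x₀ + t • u) - f x₀) / t`, `t > 0`. -/
def recAt (f : E → EReal) (x₀ u : E) : EReal :=
  ⨆ t ∈ Set.Ioi (0 : ℝ), ((t⁻¹ : ℝ) : EReal) * (f (x₀ + t • u) - f x₀)

/-- Sublinear function: positively homogeneous and subadditive. -/
def SublinearFn (g : E → EReal) : Prop :=
  g 0 = 0 ∧ (∀ x : E, ∀ t : ℝ, 0 < t → g (t • x) = (t : EReal) * g x) ∧
    ∀ x y : E, g (x + y) ≤ g x + g y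

variable [TopologicalSpace E]

/-- `Γ(E)`: proper lower semicontinuous convex functions. -/
def GammaFn (f : E → EReal) : Prop :=
  (∃ x, f x ≠ ⊤) ∧ (∀ x, f x ≠ ⊥) ∧
    Convex ℝ {p : E × ℝ | f p.1 ≤ (p.2 : EReal)} ∧ LowerSemicontinuous f

/-- Subdifferential at `0`, as a subset of the weak* dual. -/
def subdiff0 (g : E → EReal) : Set (WeakDual ℝ E) :=
  {xs | ∀ x, (xs x : EReal) ≤ g x}

/-- Fenchel conjugate. -/
def conjFn (f : E → EReal) (xs : WeakDual ℝ E) : EReal :=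
  ⨆ x, ((xs x : EReal) - f x)

/-- Domain of the conjugate. -/
def domConj (f : E → EReal) : Set (WeakDual ℝ E) := {xs | conjFn f xs ≠ ⊤}

/-- `xs ∈ ∂f(x)`. -/
def inSubdiff (f : E → EReal) (xs : WeakDual ℝ E) (x : E) : Prop :=
  f x ≠ ⊤ ∧ f x ≠ ⊥ ∧ ∀ x' : E, ((xs x' - xs x : ℝ) : EReal) + f x ≤ f x'

/-- Directionally coercive function. -/
def DirCoercive (f : E → EReal) : Prop :=
  ∀ x : E, ∀ u : E, u ≠ 0 → Filter.Tendsto (fun t : ℝ => f (x + t • u)) Filter.atTop (nhds ⊤)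

/-- The set `L_{x*} = {x | g(x) = ⟨x, x*⟩ and g(-x) = -⟨x, x*⟩}`. -/
def LxSet (g : E → EReal) (xs : WeakDual ℝ E) : Set E :=
  {x | g x = (xs x : EReal) ∧ g (-x) = ((-(xs x) : ℝ) : EReal)}

end Defs

section QRI

variable {F : Type*} [AddCommGroup F] [Module ℝ F] [TopologicalSpace F]

/-- The cone `ℝ₊ (A - a)`. -/
def coneGen (A : Set F) (a : F) : Set F :=
  {x | ∃ t : ℝ, 0 ≤ t ∧ ∃ b ∈ A, x = t • (b - a)}

/-- Quasi-relative interior. -/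
def qri (A : Set F) : Set F :=
  {a ∈ A | ∃ S : Submodule ℝ F, closure (coneGen A a) = (S : Set F)}

/-- Quasi-interior. -/
def qi (A : Set F) : Set F :=
  {a ∈ A | closure (coneGen A a) = Set.univ}

/-- Algebraic core of a set. -/
def coreSet (A : Set F) : Set F :=
  {a : F | ∀ u : F, ∃ δ : ℝ, 0 < δ ∧ ∀ t ∈ Set.Icc (0 : ℝ) δ, a + t • u ∈ A}

end QRI

variable {X : Type*}

set_option linter.unusedSectionVars false

section Lemmas

variable [AddCommGroup X] [Module ℝ X] [TopologicalSpace X] [IsTopologicalAddGroup X]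
    [ContinuousSMul ℝ X] [LocallyConvexSpace ℝ X]

theorem epi_closed (g : X → EReal) (hlsc : LowerSemicontinuous g) :
    IsClosed {p : X × ℝ | g p.1 ≤ (p.2 : EReal)} := by
  rw [← isOpen_compl_iff, isOpen_iff_mem_nhds]
  rintro ⟨x, t⟩ hp
  simp only [mem_compl_iff, mem_setOf_eq, not_le] at hp
  obtain ⟨c, hc1, hc2⟩ := exists_between hp
  have hct : c ≠ ⊤ := (lt_of_lt_of_le hc2 le_top).ne
  have hcb : c ≠ ⊥ := (bot_le.trans_lt hc1).ne'
  lift c to ℝ using ⟨hct, hcb⟩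
  have h1 : {y : X | (c : EReal) < g y} ∈ 𝓝 x := hlsc x c hc2
  have h2 : {s : ℝ | s < c} ∈ 𝓝 t := Iio_mem_nhds (by exact_mod_cast hc1)
  have hprod := Filter.prod_mem_prod h1 h2
  rw [← nhds_prod_eq] at hprod
  filter_upwards [hprod] with p hp'
  obtain ⟨h1', h2'⟩ := hp'
  simp only [mem_compl_iff, mem_setOf_eq, not_le]
  exact lt_trans (by exact_mod_cast h2') h1'

theorem epi_convex (g : X → EReal) (hsub : SublinearFn g) :
    Convex ℝ {p : X × ℝ | g p.1 ≤ (p.2 : EReal)} := by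
  obtain ⟨h0, hpos, hadd⟩ := hsub
  have key : ∀ (r : ℝ) (z : X) (u : ℝ), 0 ≤ r → g z ≤ (u : EReal) →
      g (r • z) ≤ ((r * u : ℝ) : EReal) := by
    intro r z u hr hz
    rcases eq_or_lt_of_le hr with h | h
    · simp [← h, h0]
    · rw [hpos z r h, EReal.coe_mul]
      exact mul_le_mul_of_nonneg_left hz (by exact_mod_cast h.le)
  rintro ⟨x, s⟩ hx ⟨y, t⟩ hy a b ha hb hab
  simp only [mem_setOf_eq] at hx hy ⊢
  calc g (a • x + b • y) ≤ g (a • x) + g (b • y) := hadd _ _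
    _ ≤ ((a * s : ℝ) : EReal) + ((b * t : ℝ) : EReal) :=
        add_le_add (key a x s ha hx) (key b y t hb hy)
    _ = (((a • (x, s) + b • (y, t)).2 : ℝ) : EReal) := by
        rw [← EReal.coe_add]; norm_num [smul_eq_mul]

theorem sep_lemma (g : X → EReal) (hsub : SublinearFn g)
    (hlsc : LowerSemicontinuous g) (x₀ : X) (r : ℝ) (hr : (r : EReal) < g x₀) :
    ∃ (φ : X →L[ℝ] ℝ) (c : ℝ), c ≤ 0 ∧
      (∀ x : X, ∀ t : ℝ, g x ≤ (t : EReal) → φ x + t * c ≤ 0) ∧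
      0 < φ x₀ + r * c := by
  obtain ⟨h0, hpos, hadd⟩ := hsub
  set epi : Set (X × ℝ) := {p : X × ℝ | g p.1 ≤ (p.2 : EReal)} with hepi
  have hmem : (x₀, r) ∉ epi := by simp only [hepi, mem_setOf_eq]; exact not_le.2 hr
  obtain ⟨f, u, hfu, huf⟩ := geometric_hahn_banach_closed_point
    (epi_convex g ⟨h0, hpos, hadd⟩) (epi_closed g hlsc) hmem
  have h0epi : ((0 : X), (0 : ℝ)) ∈ epi := by
    simp only [hepi, mem_setOf_eq, h0]; exact le_of_eq (by norm_num)
  have hu : 0 < u := by simpa [← Prod.zero_eq_mk] using hfu _ h0epi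
  -- f is nonpositive on epi (cone argument)
  have hnonpos : ∀ p ∈ epi, f p ≤ 0 := by
    intro p hp
    by_contra hfp
    push_neg at hfp
    set s : ℝ := (u + 1) / f p with hs
    have hs0 : 0 < s := div_pos (by linarith) hfp
    have hsp : s • p ∈ epi := by
      simp only [hepi, mem_setOf_eq, Prod.smul_fst, Prod.smul_snd] at hp ⊢
      rw [hpos p.1 s hs0, smul_eq_mul, EReal.coe_mul]
      exact mul_le_mul_of_nonneg_left hp (by exact_mod_cast hs0.le)
    have := hfu _ hsp
    rw [map_smul, smul_eq_mul, hs, div_mul_cancel₀ _ hfp.ne'] at this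
    linarith
  refine ⟨f.comp (ContinuousLinearMap.inl ℝ X ℝ), f (0, 1), ?_, ?_, ?_⟩
  · simpa using hnonpos ((0:X), (1:ℝ)) (by simp [hepi, h0, le_of_eq])
  · intro x t hx
    have hdec : f (x, t) = f ((ContinuousLinearMap.inl ℝ X ℝ) x) + t * f (0, 1) := by
      have : (x, t) = (x, (0:ℝ)) + t • ((0:X), (1:ℝ)) := by simp
      rw [this, map_add, map_smul, smul_eq_mul]; simp
    have := hnonpos (x, t) hx
    rw [hdec] at this
    simpa using this
  · have hdec : f (x₀, r) = f ((ContinuousLinearMap.inl ℝ X ℝ) x₀) + r * f (0, 1) := by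
      have : (x₀, r) = (x₀, (0:ℝ)) + r • ((0:X), (1:ℝ)) := by simp
      rw [this, map_add, map_smul, smul_eq_mul]; simp
    simp only [ContinuousLinearMap.comp_apply]
    rw [← hdec]
    linarith [huf]

theorem mk_subdiff (g : X → EReal) (hproper : ∀ x, g x ≠ ⊥) (φ : X →L[ℝ] ℝ) (c : ℝ) (hc : c < 0)
    (h : ∀ x : X, ∀ t : ℝ, g x ≤ (t : EReal) → φ x + t * c ≤ 0) :
    (((-c)⁻¹ • φ : WeakDual ℝ X)) ∈ subdiff0 g := by
  intro x
  rcases eq_or_ne (g x) ⊤ with h1 | h1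
  · simp [h1]
  · have hx : g x = ((g x).toReal : EReal) := (EReal.coe_toReal h1 (hproper x)).symm
    set t := (g x).toReal
    have := h x t (le_of_eq hx)
    have hφ : φ x ≤ t * (-c) := by nlinarith
    have : (-c)⁻¹ * φ x ≤ t := by
      rw [inv_mul_le_iff₀ (by linarith)]
      linarith [hφ]
    rw [hx]
    exact_mod_cast this

theorem subdiff_nonempty (g : X → EReal) (hsub : SublinearFn g) (hproper : ∀ x, g x ≠ ⊥)
    (hlsc : LowerSemicontinuous g) : ∃ ys : WeakDual ℝ X, ys ∈ subdiff0 g := by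
  have hr : ((-1 : ℝ) : EReal) < g 0 := by rw [hsub.1]; exact_mod_cast neg_one_lt_zero
  obtain ⟨φ, c, hc, hsep, hstrict⟩ := sep_lemma g hsub hlsc 0 (-1) hr
  have hc0 : c < 0 := by
    rcases lt_or_eq_of_le hc with h | h
    · exact h
    · exfalso; rw [h] at hstrict; simp at hstrict
  exact ⟨_, mk_subdiff g hproper φ c hc0 hsep⟩

theorem exists_gt (g : X → EReal) (hsub : SublinearFn g) (hproper : ∀ x, g x ≠ ⊥)
    (hlsc : LowerSemicontinuous g) (x₀ : X) (r : ℝ) (hr : (r : EReal) < g x₀) :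
    ∃ ys ∈ subdiff0 g, r < ys x₀ := by
  obtain ⟨φ, c, hc, hsep, hstrict⟩ := sep_lemma g hsub hlsc x₀ r hr
  rcases lt_or_eq_of_le hc with hc0 | hc0
  · refine ⟨_, mk_subdiff g hproper φ c hc0 hsep, ?_⟩
    have : r * (-c) < φ x₀ := by nlinarith
    have : r < (-c)⁻¹ * φ x₀ := by
      rw [lt_inv_mul_iff₀ (by linarith)]; nlinarith
    exact this
  · -- c = 0 case
    obtain ⟨ys₀, hys₀⟩ := subdiff_nonempty g hsub hproper hlsc
    obtain ⟨ψ, hψ⟩ : ∃ ψ : WeakDual ℝ X, ∀ x, ψ x = φ x := ⟨φ, fun _ => rfl⟩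
    have hφ0 : 0 < φ x₀ := by rw [hc0] at hstrict; simpa using hstrict
    set n : ℝ := max 0 ((r + 1 - ys₀ x₀) / φ x₀) with hn
    have hn0 : 0 ≤ n := le_max_left _ _
    refine ⟨ys₀ + n • ψ, ?_, ?_⟩
    · intro x
      rcases eq_or_ne (g x) ⊤ with h1 | h1
      · simp [h1]
      · have hx : g x = ((g x).toReal : EReal) := (EReal.coe_toReal h1 (hproper x)).symm
        set t := (g x).toReal
        have hφx : φ x ≤ 0 := by have := hsep x t (le_of_eq hx); rw [hc0] at this; simpa using this
        have hy : (ys₀ x : EReal) ≤ (t : EReal) := by rw [← hx]; exact hys₀ x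
        have hy' : ys₀ x ≤ t := by exact_mod_cast hy
        have h2 : (ys₀ + n • ψ) x = ys₀ x + n * φ x := by rw [← hψ]; rfl
        have : (ys₀ + n • ψ) x ≤ t := by rw [h2]; nlinarith
        rw [hx]; exact_mod_cast this
    · have h1 : (r + 1 - ys₀ x₀) / φ x₀ ≤ n := le_max_right _ _
      have : r + 1 - ys₀ x₀ ≤ n * φ x₀ := by
        rw [div_le_iff₀ hφ0] at h1; linarith
      have h2 : (ys₀ + n • ψ) x₀ = ys₀ x₀ + n * φ x₀ := by rw [← hψ]; rfl
      rw [h2]; linarith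

end Lemmas
theorem stmt4 [AddCommGroup X] [Module ℝ X] [TopologicalSpace X] [IsTopologicalAddGroup X]
    [ContinuousSMul ℝ X] [LocallyConvexSpace ℝ X] [T2Space X]
    (g : X → EReal) (hsub : SublinearFn g) (hproper : ∀ x, g x ≠ ⊥)
    (hlsc : LowerSemicontinuous g) (xs : WeakDual ℝ X) :
    IsClosed (LxSet g xs) ∧
    (∃ S : Submodule ℝ X, LxSet g xs = (S : Set X)) ∧
    LxSet g xs = {x : X | g x ≤ (xs x : EReal) ∧ g (-x) ≤ ((-(xs x) : ℝ) : EReal)} ∧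
    LxSet g xs = {x : X | ∀ ys ∈ subdiff0 g, (ys - xs) x = 0} ∧
    ∀ x u : X, u ∈ LxSet g xs → g (x + u) = g x + ((xs u : ℝ) : EReal) := by
  obtain ⟨h0, hpos, hadd⟩ := hsub
  -- part 3: the "≤" description
  have key : ∀ x : X, g x ≤ (xs x : EReal) → g (-x) ≤ ((-(xs x) : ℝ) : EReal) →
      g x = (xs x : EReal) ∧ g (-x) = ((-(xs x) : ℝ) : EReal) := by
    intro x h1 h2
    have hsum : (0 : EReal) ≤ g x + g (-x) := by
      rw [← h0]
      have := hadd x (-x)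
      simpa using this
    have hx1 : g x ≠ ⊤ := ne_top_of_le_ne_top (EReal.coe_ne_top _) h1
    have hx2 : g (-x) ≠ ⊤ := ne_top_of_le_ne_top (EReal.coe_ne_top _) h2
    have ha : g x = ((g x).toReal : EReal) := (EReal.coe_toReal hx1 (hproper x)).symm
    have hb : g (-x) = ((g (-x)).toReal : EReal) := (EReal.coe_toReal hx2 (hproper (-x))).symm
    set a := (g x).toReal
    set b := (g (-x)).toReal
    rw [ha] at h1 ⊢
    rw [hb] at h2 ⊢
    rw [ha, hb, ← EReal.coe_add] at hsum
    have h1' : a ≤ xs x := by exact_mod_cast h1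
    have h2' : b ≤ -(xs x) := by exact_mod_cast h2
    have hsum' : (0:ℝ) ≤ a + b := by exact_mod_cast hsum
    constructor
    · exact_mod_cast (by linarith : a = xs x)
    · exact_mod_cast (by linarith : b = -(xs x))
  have hset3 : LxSet g xs = {x : X | g x ≤ (xs x : EReal) ∧ g (-x) ≤ ((-(xs x) : ℝ) : EReal)} := by
    ext x
    constructor
    · rintro ⟨e1, e2⟩; exact ⟨le_of_eq e1, le_of_eq e2⟩
    · rintro ⟨e1, e2⟩; exact key x e1 e2
  -- continuity of xs
  have hxscont : Continuous fun x : X => xs x := by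
    exact (show X →L[ℝ] ℝ from xs).continuous
  -- part 1 : closed
  have hclosed : IsClosed (LxSet g xs) := by
    rw [hset3]
    have h1 : IsClosed ((fun x : X => (x, xs x)) ⁻¹' {p : X × ℝ | g p.1 ≤ (p.2 : EReal)}) :=
      (epi_closed g hlsc).preimage (continuous_id.prodMk hxscont)
    have h2 : IsClosed ((fun x : X => (-x, -(xs x))) ⁻¹' {p : X × ℝ | g p.1 ≤ (p.2 : EReal)}) :=
      (epi_closed g hlsc).preimage (continuous_neg.prodMk hxscont.neg)
    exact h1.inter h2
  -- negation stability
  have hneg : ∀ u ∈ LxSet g xs, -u ∈ LxSet g xs := by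
    rintro u ⟨e1, e2⟩
    refine ⟨by rw [map_neg, e2], ?_⟩
    rw [neg_neg, map_neg, neg_neg, e1]
  -- positive scaling
  have hsmul_pos : ∀ t : ℝ, 0 < t → ∀ u ∈ LxSet g xs, t • u ∈ LxSet g xs := by
    rintro t ht u ⟨e1, e2⟩
    constructor
    · rw [hpos u t ht, e1, map_smul, smul_eq_mul, ← EReal.coe_mul]
    · rw [← smul_neg, hpos (-u) t ht, e2, map_smul, smul_eq_mul, ← EReal.coe_mul]
      norm_num
  have hzero : (0:X) ∈ LxSet g xs := by
    constructor <;> simp [h0]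
  -- part 2 : submodule
  have hS : ∃ S : Submodule ℝ X, LxSet g xs = (S : Set X) := by
    refine ⟨{ carrier := LxSet g xs,
              add_mem' := ?_,
              zero_mem' := hzero,
              smul_mem' := ?_ }, rfl⟩
    · rintro a b ⟨e1, e2⟩ ⟨f1, f2⟩
      rw [hset3]
      constructor
      · calc g (a + b) ≤ g a + g b := hadd a b
          _ = ((xs a + xs b : ℝ) : EReal) := by rw [e1, f1, EReal.coe_add]
          _ = ((xs (a + b) : ℝ) : EReal) := by rw [map_add]
      · calc g (-(a + b)) = g (-a + -b) := by rw [neg_add]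
          _ ≤ g (-a) + g (-b) := hadd _ _
          _ = ((-(xs a) + -(xs b) : ℝ) : EReal) := by rw [e2, f2]; norm_cast
          _ = ((-(xs (a + b)) : ℝ) : EReal) := by rw [map_add]; norm_cast; ring
    · intro t u hu
      rcases lt_trichotomy t 0 with ht | ht | ht
      · have : t • u = (-t) • (-u) := by rw [smul_neg, neg_smul, neg_neg]
        rw [this]
        exact hsmul_pos (-t) (by linarith) (-u) (hneg u hu)
      · simpa [ht] using hzero
      · exact hsmul_pos t ht u hu
  -- part 4
  have hset4 : LxSet g xs = {x : X | ∀ ys ∈ subdiff0 g, (ys - xs) x = 0} := by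
    have happ : ∀ ys : WeakDual ℝ X, ∀ x : X, (ys - xs) x = ys x - xs x := fun _ _ => rfl
    ext x
    constructor
    · rintro ⟨e1, e2⟩ ys hys
      have h1 : ys x ≤ xs x := by
        have := hys x; rw [e1] at this; exact_mod_cast this
      have h2 : -(ys x) ≤ -(xs x) := by
        have := hys (-x); rw [e2, map_neg] at this; exact_mod_cast this
      rw [happ]
      linarith
    · intro hx
      obtain ⟨ys₀, hys₀⟩ := subdiff_nonempty g ⟨h0, hpos, hadd⟩ hproper hlsc
      have heq : ∀ ys ∈ subdiff0 g, ys x = xs x := by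
        intro ys hys
        have := hx ys hys
        rw [happ] at this
        linarith [this]
      have hle1 : ((xs x : ℝ) : EReal) ≤ g x := by
        rw [← heq ys₀ hys₀]; exact hys₀ x
      have hge1 : g x ≤ ((xs x : ℝ) : EReal) := by
        by_contra h
        push_neg at h
        obtain ⟨ys, hys, hgt⟩ := exists_gt g ⟨h0, hpos, hadd⟩ hproper hlsc x (xs x) h
        rw [heq ys hys] at hgt
        exact lt_irrefl _ hgt
      have hle2 : ((-(xs x) : ℝ) : EReal) ≤ g (-x) := by
        have := hys₀ (-x)
        rw [map_neg, heq ys₀ hys₀] at this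
        exact this
      have hge2 : g (-x) ≤ ((-(xs x) : ℝ) : EReal) := by
        by_contra h
        push_neg at h
        obtain ⟨ys, hys, hgt⟩ := exists_gt g ⟨h0, hpos, hadd⟩ hproper hlsc (-x) (-(xs x)) h
        rw [map_neg, heq ys hys] at hgt
        exact lt_irrefl _ (by linarith : -(xs x) < -(xs x))
      exact ⟨le_antisymm hge1 hle1, le_antisymm hge2 hle2⟩
  refine ⟨hclosed, hS, hset3, hset4, ?_⟩
  -- part 5
  rintro x u ⟨e1, e2⟩
  apply le_antisymm
  · calc g (x + u) ≤ g x + g u := hadd x u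
      _ = g x + ((xs u : ℝ) : EReal) := by rw [e1]
  · have h2 : g x ≤ g (x + u) + ((-(xs u) : ℝ) : EReal) := by
      have := hadd (x + u) (-u)
      rw [add_neg_cancel_right, e2] at this
      exact this
    have h3 : g x + ((xs u : ℝ) : EReal) ≤ (g (x + u) + ((-(xs u) : ℝ) : EReal)) + ((xs u : ℝ) : EReal) :=
      add_le_add_left h2 _
    have h4 : (g (x + u) + ((-(xs u) : ℝ) : EReal)) + ((xs u : ℝ) : EReal) = g (x + u) := by
      rw [EReal.coe_neg, ← sub_eq_add_neg]
      exact EReal.sub_add_cancel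
    rwa [h4] at h3
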